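/- Let X be a real Hilbert space, let f, g : X → ℝ∪{+∞} be proper Φ_lsc-convex functions, let α ∈ ℝ, ε ≥ 0, and let x̄ ∈ dom(f) ∩ dom(g) satisfy f(x̄) ≥ α and g(x̄) ≥ α. If (0,0) ∈ co(∂^ε_lsc f(x̄) ∪ ∂^ε_lsc g(x̄)) (convex hull taken in ℝ×X), then there exist φ₁ ∈ supp(f) and φ₂ ∈ supp(g) such that {x ∈ X : φ₁(x) < α − ε} ∩ {x ∈ X : φ₂(x) < α − ε} = ∅. -/

import Mathlib

open scoped RealInnerProductSpace

noncomputable section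

/-- The class `Φ_lsc` of continuous functions `x ↦ -a‖x‖² + ⟪v,x⟫ + c` with `a ≥ 0`. -/
def PhiLsc (X : Type*) [NormedAddCommGroup X] [InnerProductSpace ℝ X] : Set (X → ℝ) :=
  {φ | ∃ a : ℝ, ∃ v : X, ∃ c : ℝ, 0 ≤ a ∧ ∀ x, φ x = -a * ‖x‖ ^ 2 + ⟪v, x⟫ + c}

/-- The support set `supp(f) = {φ ∈ Φ_lsc : φ ≤ f}` of `f : X → ℝ∪{+∞}`. -/
def PhiSupp {X : Type*} [NormedAddCommGroup X] [InnerProductSpace ℝ X] (f : X → EReal) :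
    Set (X → ℝ) :=
  {φ | φ ∈ PhiLsc X ∧ ∀ x, (φ x : EReal) ≤ f x}

/-- The effective domain of `f`. -/
def PhiDom {X : Type*} (f : X → EReal) : Set X := {x | f x < ⊤}

/-- `f` is `Φ_lsc`-convex: it is the pointwise supremum of its support set. -/
def PhiConvexOn {X : Type*} [NormedAddCommGroup X] [InnerProductSpace ℝ X] (f : X → EReal) :
    Prop :=
  ∀ x, f x = ⨆ φ ∈ PhiSupp f, (φ x : EReal)

/-- The set of `ε`-`Φ_lsc`-subgradients of `f` at `xb`:
pairs `(a,v)`, `a ≥ 0`, with `f x - f xb ≥ ⟪v, x - xb⟫ - a‖x‖² + a‖xb‖² - ε` for all `x`. -/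
def SubLscE {X : Type*} [NormedAddCommGroup X] [InnerProductSpace ℝ X] (f : X → EReal)
    (ε : ℝ) (xb : X) : Set (ℝ × X) :=
  {p | 0 ≤ p.1 ∧ ∀ x : X,
    f xb + ((⟪p.2, x - xb⟫ - p.1 * ‖x‖ ^ 2 + p.1 * ‖xb‖ ^ 2 - ε : ℝ) : EReal) ≤ f x}

/-- The set of local `Φ_lsc`-subgradients of `f` at `xb`. -/
def SubLscLoc {X : Type*} [NormedAddCommGroup X] [InnerProductSpace ℝ X] (f : X → EReal)
    (xb : X) : Set (ℝ × X) :=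
  {p | 0 ≤ p.1 ∧ ∃ δ : ℝ, 0 < δ ∧ ∀ x : X, ‖x - xb‖ < δ →
    f xb + ((⟪p.2, x - xb⟫ - p.1 * ‖x‖ ^ 2 + p.1 * ‖xb‖ ^ 2 : ℝ) : EReal) ≤ f x}

/-- `f` is paraconvex (with exponent 2). -/
def ParaconvexOn {X : Type*} [NormedAddCommGroup X] [InnerProductSpace ℝ X]
    (f : X → EReal) : Prop :=
  ∃ C : ℝ, 0 < C ∧ ∀ x y : X, ∀ t : ℝ, t ∈ Set.Icc (0 : ℝ) 1 →
    f (t • x + (1 - t) • y) ≤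
      (t : EReal) * f x + ((1 - t : ℝ) : EReal) * f y + ((C * ‖x - y‖ ^ 2 : ℝ) : EReal)

/-- The proximal subdifferential of `f` at `xb`. -/
def ProxSub {X : Type*} [NormedAddCommGroup X] [InnerProductSpace ℝ X] (f : X → EReal)
    (xb : X) : Set X :=
  {v | ∃ δ : ℝ, 0 < δ ∧ ∃ ρ : ℝ, 0 ≤ ρ ∧ ∀ x : X, ‖x - xb‖ < δ →
    f xb + ((⟪v, x - xb⟫ - ρ / 2 * ‖x - xb‖ ^ 2 : ℝ) : EReal) ≤ f x}

/-- The Dini subdifferential of `f` at `xb`. -/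
def DiniSub {X : Type*} [NormedAddCommGroup X] [InnerProductSpace ℝ X] (f : X → EReal)
    (xb : X) : Set X :=
  {w | ∀ h : X, ∀ t : ℕ → ℝ, ∀ u : ℕ → X, (∀ n, 0 < t n) →
    Filter.Tendsto t Filter.atTop (nhds 0) → Filter.Tendsto u Filter.atTop (nhds h) →
    ((⟪w, h⟫ : ℝ) : EReal) ≤
      Filter.liminf (fun n => (f (xb + t n • u n) - f xb) * (((t n)⁻¹ : ℝ) : EReal)) Filter.atTop}

/-- The `Φ_lsc`-subgradients of a real-valued `f` at `xb`. -/
def SubLscR {X : Type*} [NormedAddCommGroup X] [InnerProductSpace ℝ X] (f : X → ℝ)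
    (xb : X) : Set (ℝ × X) :=
  {p | 0 ≤ p.1 ∧ ∀ x : X,
    ⟪p.2, x - xb⟫ - p.1 * ‖x‖ ^ 2 + p.1 * ‖xb‖ ^ 2 ≤ f x - f xb}

lemma subLscE_convex {X : Type*} [NormedAddCommGroup X] [InnerProductSpace ℝ X]
    (f : X → EReal) (ε : ℝ) (xb : X) (hbot : f xb ≠ ⊥) (htop : f xb ≠ ⊤) :
    Convex ℝ (SubLscE f ε xb) := by
  rintro p hp q hq a b ha hb hab
  set r := (f xb).toReal with hrdef
  have hr : f xb = (r : EReal) := (EReal.coe_toReal htop hbot).symm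
  refine ⟨by simpa using add_nonneg (mul_nonneg ha hp.1) (mul_nonneg hb hq.1), fun x => ?_⟩
  by_cases hx : f x = ⊤
  · rw [hx]; exact le_top
  · have hxb : f x ≠ ⊥ := by
      intro hb'
      have := hp.2 x
      rw [hb', hr, ← EReal.coe_add] at this
      exact (EReal.coe_ne_bot _) (le_bot_iff.mp this)
    set s := (f x).toReal with hsdef
    have hs : f x = (s : EReal) := (EReal.coe_toReal hx hxb).symm
    have h1 : r + (⟪p.2, x - xb⟫ - p.1 * ‖x‖ ^ 2 + p.1 * ‖xb‖ ^ 2 - ε) ≤ s := by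
      have := hp.2 x
      rw [hr, hs, ← EReal.coe_add, EReal.coe_le_coe_iff] at this
      exact this
    have h2 : r + (⟪q.2, x - xb⟫ - q.1 * ‖x‖ ^ 2 + q.1 * ‖xb‖ ^ 2 - ε) ≤ s := by
      have := hq.2 x
      rw [hr, hs, ← EReal.coe_add, EReal.coe_le_coe_iff] at this
      exact this
    rw [hr, hs, ← EReal.coe_add, EReal.coe_le_coe_iff]
    have hinner : ⟪(a • p + b • q).2, x - xb⟫ = a * ⟪p.2, x - xb⟫ + b * ⟪q.2, x - xb⟫ := by
      simp [inner_add_left, real_inner_smul_left]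
    have hfst : (a • p + b • q).1 = a * p.1 + b * q.1 := rfl
    rw [hinner, hfst]
    have ha1 := mul_le_mul_of_nonneg_left h1 ha
    have hb1 := mul_le_mul_of_nonneg_left h2 hb
    have habs : a * s + b * s = s := by rw [← add_mul, hab, one_mul]
    have habr : a * r + b * r = r := by rw [← add_mul, hab, one_mul]
    have habe : a * ε + b * ε = ε := by rw [← add_mul, hab, one_mul]
    nlinarith [ha1, hb1, habs, habr, habe]

lemma supp_of_subgrad {X : Type*} [NormedAddCommGroup X] [InnerProductSpace ℝ X]
    (f : X → EReal) (ε : ℝ) (xb : X) (α : ℝ) (hα : (α : EReal) ≤ f xb)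
    (p : ℝ × X) (hp : p ∈ SubLscE f ε xb) (hp1 : p.1 = 0) :
    (fun x => ⟪p.2, x - xb⟫ + (α - ε)) ∈ PhiSupp f := by
  constructor
  · refine ⟨0, p.2, α - ε - ⟪p.2, xb⟫, le_refl 0, fun x => ?_⟩
    simp only [inner_sub_right]
    ring
  · intro x
    have h := hp.2 x
    rw [hp1] at h
    have heq : (⟪p.2, x - xb⟫ - 0 * ‖x‖ ^ 2 + 0 * ‖xb‖ ^ 2 - ε) = ⟪p.2, x - xb⟫ - ε := by ring
    rw [heq] at h
    have hle : ((α : EReal)) + ((⟪p.2, x - xb⟫ - ε : ℝ) : EReal) ≤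
        f xb + ((⟪p.2, x - xb⟫ - ε : ℝ) : EReal) :=
      add_le_add hα (le_refl _)
    have : ((⟪p.2, x - xb⟫ + (α - ε) : ℝ) : EReal) =
        ((α : EReal)) + ((⟪p.2, x - xb⟫ - ε : ℝ) : EReal) := by
      rw [← EReal.coe_add]
      norm_cast
      ring
    rw [this]
    exact le_trans hle h

lemma zero_in_sub_case {X : Type*} [NormedAddCommGroup X] [InnerProductSpace ℝ X]
    (f : X → EReal) (ε : ℝ) (xb : X) (α : ℝ) (hα : (α : EReal) ≤ f xb)
    (h0 : ((0, 0) : ℝ × X) ∈ SubLscE f ε xb) :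
    ∃ φ ∈ PhiSupp f, {x : X | φ x < α - ε} = ∅ := by
  refine ⟨_, supp_of_subgrad f ε xb α hα ((0, 0) : ℝ × X) h0 rfl, ?_⟩
  ext x
  simp

/-- if the zero subgradient condition `(0,0) ∈ co(∂^ε f(xb) ∪ ∂^ε g(xb))`
holds at a point `xb` where `f(xb) ≥ α` and `g(xb) ≥ α`, then some `φ₁ ∈ supp f` and
`φ₂ ∈ supp g` satisfy the intersection property at level `α - ε`. -/
theorem stmt_13 {X : Type*} [NormedAddCommGroup X] [InnerProductSpace ℝ X] [CompleteSpace X]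
    (f g : X → EReal) (hfbot : ∀ x, f x ≠ ⊥) (hgbot : ∀ x, g x ≠ ⊥)
    (hfsupp : (PhiSupp f).Nonempty) (hfdom : (PhiDom f).Nonempty)
    (hgsupp : (PhiSupp g).Nonempty) (hgdom : (PhiDom g).Nonempty)
    (hfconv : PhiConvexOn f) (hgconv : PhiConvexOn g)
    (α ε : ℝ) (hε : 0 ≤ ε)
    (xb : X) (hxf : xb ∈ PhiDom f) (hxg : xb ∈ PhiDom g)
    (hfα : (α : EReal) ≤ f xb) (hgα : (α : EReal) ≤ g xb)
    (hzs : ((0, 0) : ℝ × X) ∈ convexHull ℝ (SubLscE f ε xb ∪ SubLscE g ε xb)) :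
    ∃ φ₁ ∈ PhiSupp f, ∃ φ₂ ∈ PhiSupp g,
      {x : X | φ₁ x < α - ε} ∩ {x : X | φ₂ x < α - ε} = ∅ := by
  have hfbotx : f xb ≠ ⊥ := hfbot xb
  have hftopx : f xb ≠ ⊤ := ne_of_lt hxf
  have hgbotx : g xb ≠ ⊥ := hgbot xb
  have hgtopx : g xb ≠ ⊤ := ne_of_lt hxg
  have hAconv := subLscE_convex f ε xb hfbotx hftopx
  have hBconv := subLscE_convex g ε xb hgbotx hgtopx
  -- three possible outcomes
  have key : ((0,0) : ℝ × X) ∈ SubLscE f ε xb ∨ ((0,0) : ℝ × X) ∈ SubLscE g ε xb ∨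
      ∃ t : ℝ, ∃ p ∈ SubLscE f ε xb, ∃ q ∈ SubLscE g ε xb,
        0 < t ∧ t < 1 ∧ t • p + (1 - t) • q = (0, 0) := by
    rcases Set.eq_empty_or_nonempty (SubLscE f ε xb) with hA | hA
    · right; left
      rw [hA, Set.empty_union, hBconv.convexHull_eq] at hzs
      exact hzs
    rcases Set.eq_empty_or_nonempty (SubLscE g ε xb) with hB | hB
    · left
      rw [hB, Set.union_empty, hAconv.convexHull_eq] at hzs
      exact hzs
    rw [Convex.convexHull_union hAconv hBconv hA hB, mem_convexJoin] at hzs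
    obtain ⟨p, hp, q, hq, u, v, hu, hv, huv, heq⟩ := hzs
    rcases eq_or_lt_of_le hu with hu0 | hu0
    · right; left
      have : q = ((0,0) : ℝ × X) := by
        have hv1 : v = 1 := by linarith
        rw [← hu0, hv1] at heq
        simpa using heq
      rwa [← this]
    rcases eq_or_lt_of_le hv with hv0 | hv0
    · left
      have : p = ((0,0) : ℝ × X) := by
        have hu1 : u = 1 := by linarith
        rw [← hv0, hu1] at heq
        simpa using heq
      rwa [← this]
    · right; right
      exact ⟨u, p, hp, q, hq, hu0, by linarith, by rw [show (1 : ℝ) - u = v by linarith]; exact heq⟩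
  rcases key with h0 | h0 | ⟨t, p, hp, q, hq, ht0, ht1, heq⟩
  · obtain ⟨φ₁, hφ₁, hempty⟩ := zero_in_sub_case f ε xb α hfα h0
    obtain ⟨φ₂, hφ₂⟩ := hgsupp
    exact ⟨φ₁, hφ₁, φ₂, hφ₂, by rw [hempty, Set.empty_inter]⟩
  · obtain ⟨φ₂, hφ₂, hempty⟩ := zero_in_sub_case g ε xb α hgα h0
    obtain ⟨φ₁, hφ₁⟩ := hfsupp
    exact ⟨φ₁, hφ₁, φ₂, hφ₂, by rw [hempty, Set.inter_empty]⟩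
  · have hfst : t * p.1 + (1 - t) * q.1 = 0 := by
      have := congrArg Prod.fst heq
      simpa using this
    have hsnd : t • p.2 + (1 - t) • q.2 = (0 : X) := by
      have := congrArg Prod.snd heq
      simpa using this
    have hp1 : p.1 = 0 := by nlinarith [hp.1, hq.1]
    have hq1 : q.1 = 0 := by nlinarith [hp.1, hq.1]
    refine ⟨_, supp_of_subgrad f ε xb α hfα p hp hp1,
      _, supp_of_subgrad g ε xb α hgα q hq hq1, ?_⟩
    rw [Set.eq_empty_iff_forall_notMem]
    rintro x ⟨h1, h2⟩
    simp only [Set.mem_setOf_eq] at h1 h2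
    have hi1 : ⟪p.2, x - xb⟫ < 0 := by linarith
    have hi2 : ⟪q.2, x - xb⟫ < 0 := by linarith
    have : ⟪t • p.2 + (1 - t) • q.2, x - xb⟫ = (0 : ℝ) := by
      rw [hsnd, inner_zero_left]
    rw [inner_add_left, real_inner_smul_left, real_inner_smul_left] at this
    nlinarith
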